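/- Let Y be a nonempty bounded subset of ℝⁿ and let F be a Lipschitz continuous function on ∂B_n(0,1) × [0, diam(Y)] with Lipschitz constant Lip(F) (with respect to the metric |θ'−θ''| + |r'−r''|). Then for all x',x'' ∈ Y with x' ≠ x'' and all y ∈ Y ∖ B_n(x',2|x'−x''|): |F((x'−y)/|x'−y|, |x'−y|) − F((x''−y)/|x''−y|, |x''−y|)| ≤ Lip(F)·(2 + diam(Y))·|x'−x''|/|x'−y|. -/

import Mathlib

open Set Metric

lemma unit_diff_aux {E : Type*} [NormedAddCommGroup E] [NormedSpace ℝ E]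
    (a b : E) (ha : a ≠ 0) (hb : b ≠ 0) :
    ‖‖a‖⁻¹ • a - ‖b‖⁻¹ • b‖ ≤ 2 * ‖a - b‖ / ‖a‖ := by
  have hA : 0 < ‖a‖ := norm_pos_iff.mpr ha
  have hB : 0 < ‖b‖ := norm_pos_iff.mpr hb
  have key : ‖a‖⁻¹ • a - ‖b‖⁻¹ • b = ‖a‖⁻¹ • (a - b) + (‖a‖⁻¹ - ‖b‖⁻¹) • b := by
    rw [smul_sub, sub_smul]; abel
  have h1 : ‖‖a‖⁻¹ • (a - b)‖ = ‖a - b‖ / ‖a‖ := by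
    rw [norm_smul, Real.norm_eq_abs, abs_inv, abs_norm]
    field_simp
  have h2 : ‖(‖a‖⁻¹ - ‖b‖⁻¹) • b‖ ≤ ‖a - b‖ / ‖a‖ := by
    rw [norm_smul, Real.norm_eq_abs]
    have e : ‖a‖⁻¹ - ‖b‖⁻¹ = (‖b‖ - ‖a‖) / (‖a‖ * ‖b‖) := by field_simp
    rw [e, abs_div, abs_of_pos (mul_pos hA hB)]
    have h3 : |‖b‖ - ‖a‖| ≤ ‖a - b‖ := by
      rw [norm_sub_rev]; exact abs_norm_sub_norm_le b a
    rw [div_mul_eq_mul_div, mul_comm ‖a‖ ‖b‖, ← div_div, mul_div_assoc,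
      div_self (ne_of_gt hB), mul_one]
    gcongr
  calc ‖‖a‖⁻¹ • a - ‖b‖⁻¹ • b‖
      ≤ ‖‖a‖⁻¹ • (a - b)‖ + ‖(‖a‖⁻¹ - ‖b‖⁻¹) • b‖ := by rw [key]; exact norm_add_le _ _
    _ ≤ ‖a - b‖ / ‖a‖ + ‖a - b‖ / ‖a‖ := by rw [h1]; exact add_le_add_right h2 _
    _ = 2 * ‖a - b‖ / ‖a‖ := by ring

/-- If `Y ⊆ ℝⁿ` is nonempty and bounded and `F` is Lipschitz on
`∂B_n(0,1) × [0, diam Y]` with constant `L` (for the metric `|θ'-θ''| + |r'-r''|`),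
then for `x', x'' ∈ Y`, `x' ≠ x''` and `y ∈ Y` outside `B_n(x', 2|x'-x''|)` one has
the estimate with constant `L(2 + diam Y)`. -/
theorem stmt_13 {n : ℕ} (Y : Set (EuclideanSpace ℝ (Fin n)))
    (hY : Y.Nonempty) (hYb : Bornology.IsBounded Y)
    (F : EuclideanSpace ℝ (Fin n) × ℝ → ℂ) (L : ℝ)
    (hF : ∀ θ' ∈ sphere (0 : EuclideanSpace ℝ (Fin n)) 1,
          ∀ θ'' ∈ sphere (0 : EuclideanSpace ℝ (Fin n)) 1,
          ∀ r' ∈ Icc (0 : ℝ) (diam Y), ∀ r'' ∈ Icc (0 : ℝ) (diam Y),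
            ‖F (θ', r') - F (θ'', r'')‖ ≤ L * (‖θ' - θ''‖ + |r' - r''|)) :
    ∀ x' ∈ Y, ∀ x'' ∈ Y, x' ≠ x'' → ∀ y ∈ Y, 2 * ‖x' - x''‖ ≤ ‖x' - y‖ →
      ‖F (‖x' - y‖⁻¹ • (x' - y), ‖x' - y‖) - F (‖x'' - y‖⁻¹ • (x'' - y), ‖x'' - y‖)‖ ≤
        L * (2 + diam Y) * ‖x' - x''‖ / ‖x' - y‖ := by
  intro x' hx' x'' hx'' hne y hy hfar
  set d := ‖x' - x''‖ with hd
  have hd0 : 0 < d := by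
    simpa [hd] using norm_pos_iff.mpr (sub_ne_zero.mpr hne)
  have hA : 0 < ‖x' - y‖ := lt_of_lt_of_le (by linarith) hfar
  have hB : 0 < ‖x'' - y‖ := by
    have : ‖x' - y‖ ≤ ‖x' - x''‖ + ‖x'' - y‖ := by
      simpa using norm_sub_le_norm_sub_add_norm_sub x' x'' y
    linarith
  have ha : x' - y ≠ 0 := by
    intro h; rw [h, norm_zero] at hA; exact lt_irrefl 0 hA
  have hb : x'' - y ≠ 0 := by
    intro h; rw [h, norm_zero] at hB; exact lt_irrefl 0 hB
  have hθ' : ‖x' - y‖⁻¹ • (x' - y) ∈ sphere (0 : EuclideanSpace ℝ (Fin n)) 1 := by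
    rw [mem_sphere_zero_iff_norm]; exact norm_smul_inv_norm ha
  have hθ'' : ‖x'' - y‖⁻¹ • (x'' - y) ∈ sphere (0 : EuclideanSpace ℝ (Fin n)) 1 := by
    rw [mem_sphere_zero_iff_norm]; exact norm_smul_inv_norm hb
  have hAd : ‖x' - y‖ ≤ diam Y := by
    have := dist_le_diam_of_mem hYb hx' hy
    rwa [dist_eq_norm] at this
  have hBd : ‖x'' - y‖ ≤ diam Y := by
    have := dist_le_diam_of_mem hYb hx'' hy
    rwa [dist_eq_norm] at this
  have hr' : ‖x' - y‖ ∈ Icc (0 : ℝ) (diam Y) := ⟨norm_nonneg _, hAd⟩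
  have hr'' : ‖x'' - y‖ ∈ Icc (0 : ℝ) (diam Y) := ⟨norm_nonneg _, hBd⟩
  -- L ≥ 0
  have hDpos : 0 < diam Y := lt_of_lt_of_le hA hAd
  have hL : 0 ≤ L := by
    have h := hF _ hθ' _ hθ' 0 ⟨le_refl _, diam_nonneg⟩ (diam Y) ⟨diam_nonneg, le_refl _⟩
    simp only [sub_self, norm_zero, zero_sub, abs_neg, abs_of_pos hDpos, zero_add] at h
    nlinarith [norm_nonneg (F (‖x' - y‖⁻¹ • (x' - y), 0) - F (‖x' - y‖⁻¹ • (x' - y), diam Y))]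
  have hmain := hF _ hθ' _ hθ'' _ hr' _ hr''
  have hθbound : ‖‖x' - y‖⁻¹ • (x' - y) - ‖x'' - y‖⁻¹ • (x'' - y)‖ ≤ 2 * d / ‖x' - y‖ := by
    have := unit_diff_aux (x' - y) (x'' - y) ha hb
    have e : (x' - y) - (x'' - y) = x' - x'' := by abel
    rwa [e] at this
  have hrbound : |‖x' - y‖ - ‖x'' - y‖| ≤ d := by
    have := abs_norm_sub_norm_le (x' - y) (x'' - y)
    have e : (x' - y) - (x'' - y) = x' - x'' := by abel
    rwa [e] at this
  have hrb2 : |‖x' - y‖ - ‖x'' - y‖| ≤ diam Y * d / ‖x' - y‖ := by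
    calc |‖x' - y‖ - ‖x'' - y‖| ≤ d := hrbound
      _ = ‖x' - y‖ * d / ‖x' - y‖ := by field_simp
      _ ≤ diam Y * d / ‖x' - y‖ := by gcongr
  calc ‖F (‖x' - y‖⁻¹ • (x' - y), ‖x' - y‖) - F (‖x'' - y‖⁻¹ • (x'' - y), ‖x'' - y‖)‖
      ≤ L * (‖‖x' - y‖⁻¹ • (x' - y) - ‖x'' - y‖⁻¹ • (x'' - y)‖ + |‖x' - y‖ - ‖x'' - y‖|) :=
        hmain
    _ ≤ L * (2 * d / ‖x' - y‖ + diam Y * d / ‖x' - y‖) :=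
        mul_le_mul_of_nonneg_left (add_le_add hθbound hrb2) hL
    _ = L * (2 + diam Y) * d / ‖x' - y‖ := by field_simp
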